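/- Let B be a C*-algebra and P ⊆ B a C*-subalgebra. If a ∈ P and b ∈ B satisfy 0 ≤ b ≤ a, then b belongs to the closure of the linear span of P·B·P, i.e., b ∈ closure(P·B·P). -/

import Mathlib

open scoped ContinuousMapZero

/-- `cfcₙ` of a selfadjoint element of a closed non-unital star subalgebra stays in the
subalgebra. -/
lemma cfcn_mem_of_isClosed {B : Type*} [NonUnitalCStarAlgebra B]
    (P : NonUnitalStarSubalgebra ℂ B) (hP : IsClosed (P : Set B)) {a : B}
    (haP : a ∈ P) (f : ℝ → ℝ) (ha : IsSelfAdjoint a) :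
    cfcₙ f a ∈ P := by
  by_cases hf : ContinuousOn f (quasispectrum ℝ a) ∧ f 0 = 0
  · obtain ⟨hf, hf0⟩ := hf
    rw [cfcₙ_apply f a hf hf0 ha]
    generalize (⟨⟨_, hf.restrict⟩, hf0⟩ : C(quasispectrum ℝ a, ℝ)₀) = g
    refine ContinuousMapZero.induction_on_of_compact (s := quasispectrum ℝ a)
      (p := fun g => cfcₙHom ha g ∈ P) ?_ ?_ ?_ ?_ ?_ ?_ ?_ g
    · show cfcₙHom ha 0 ∈ P; rw [map_zero]; exact P.zero_mem
    · have h2 : cfcₙHom ha (ContinuousMapZero.id (quasispectrum ℝ a) : C(quasispectrum ℝ a, ℝ)₀) = a :=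
        cfcₙHom_id ha
      show cfcₙHom ha (ContinuousMapZero.id (quasispectrum ℝ a) : C(quasispectrum ℝ a, ℝ)₀) ∈ P
      rw [h2]; exact haP
    · have h2 : cfcₙHom ha (ContinuousMapZero.id (quasispectrum ℝ a) : C(quasispectrum ℝ a, ℝ)₀) = a :=
        cfcₙHom_id ha
      show cfcₙHom ha (star (ContinuousMapZero.id (quasispectrum ℝ a) : C(quasispectrum ℝ a, ℝ)₀)) ∈ P
      rw [map_star, h2]
      exact star_mem haP
    · intro f g hf hg; show cfcₙHom ha _ ∈ P; rw [map_add]; exact add_mem hf hg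
    · intro f g hf hg; show cfcₙHom ha _ ∈ P; rw [map_mul]; exact mul_mem hf hg
    · intro r f hf
      show cfcₙHom ha _ ∈ P
      rw [map_smul]
      have := P.smul_mem ((algebraMap ℝ ℂ r)) hf
      rwa [algebraMap_smul] at this
    · intro f hf
      have hclosed : IsClosed {g : C(quasispectrum ℝ a, ℝ)₀ | cfcₙHom ha g ∈ P} :=
        hP.preimage (cfcₙHom_continuous ha)
      exact hclosed.closure_subset (Filter.Frequently.mem_closure hf)
  · rw [Classical.not_and_iff_not_or_not] at hf
    obtain hf | hf := hf
    · rw [cfcₙ_apply_of_not_continuousOn a hf]; exact P.zero_mem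
    · rw [cfcₙ_apply_of_not_map_zero a hf]; exact P.zero_mem

/-- If `P` is a C⋆-subalgebra of a C⋆-algebra `B`, `a ∈ P`, `b ∈ B` and `0 ≤ b ≤ a`, then
`b` lies in the norm closure of the linear span of `P·B·P`. -/
theorem mem_closure_span_of_le {B : Type*} [NonUnitalCStarAlgebra B] [PartialOrder B]
    [StarOrderedRing B]
    (P : NonUnitalStarSubalgebra ℂ B) (hPclosed : IsClosed (P : Set B))
    (a b : B) (ha : a ∈ P) (hb : 0 ≤ b) (hba : b ≤ a) :
    b ∈ closure (Submodule.span ℂ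
      {z : B | ∃ p ∈ P, ∃ x : B, ∃ q ∈ P, z = p * x * q} : Set B) := by
  have ha0 : 0 ≤ a := hb.trans hba
  have hsa : IsSelfAdjoint a := ha0.isSelfAdjoint
  have hbsa : IsSelfAdjoint b := hb.isSelfAdjoint
  set z : B := CFC.sqrt b with hzdef
  have hz0 : 0 ≤ z := CFC.sqrt_nonneg (a := b)
  have hzsa : IsSelfAdjoint z := hz0.isSelfAdjoint
  have hzz : z * z = b := CFC.sqrt_mul_sqrt_self b hb
  -- the approximate unit
  set f : ℕ → ℝ → ℝ := fun n y => 1 - (1 + ((n : ℝ) + 1) * y)⁻¹ with hf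
  set e : ℕ → B := fun n => cfcₙ (f n) a with he
  have ht : ∀ n : ℕ, (0 : ℝ) < (n : ℝ) + 1 := fun n => by positivity
  have hinv_mem : ∀ n : ℕ, ∀ y : ℝ, 0 ≤ y →
      0 ≤ (1 + ((n : ℝ) + 1) * y)⁻¹ ∧ (1 + ((n : ℝ) + 1) * y)⁻¹ ≤ 1 := by
    intro n y hy
    have h1 : (0 : ℝ) < 1 + ((n : ℝ) + 1) * y := by positivity
    exact ⟨by positivity, inv_le_one_of_one_le₀ (by nlinarith)⟩
  have he_nonneg : ∀ n, 0 ≤ e n := by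
    intro n
    refine cfcₙ_nonneg fun y hy => ?_
    have hy0 : 0 ≤ y := quasispectrum_nonneg_of_nonneg a ha0 y hy
    have := (hinv_mem n y hy0).2
    simp only [hf]
    linarith
  have he_sa : ∀ n, IsSelfAdjoint (e n) := fun n => (he_nonneg n).isSelfAdjoint
  have he_norm : ∀ n, ‖e n‖ ≤ 1 := by
    intro n
    refine norm_cfcₙ_le fun y hy => ?_
    have hy0 : 0 ≤ y := quasispectrum_nonneg_of_nonneg a ha0 y hy
    obtain ⟨h1, h2⟩ := hinv_mem n y hy0
    rw [Real.norm_eq_abs, abs_le]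
    constructor <;> simp only [hf] <;> linarith
  have he_mem : ∀ n, e n ∈ P := fun n => cfcn_mem_of_isClosed P hPclosed ha (f n) hsa
  -- the key norm estimate
  have key : ∀ n : ℕ, ‖z - e n * z‖ ≤ Real.sqrt (((n : ℝ) + 1)⁻¹) := by
    intro n
    set t : ℝ := (n : ℝ) + 1 with ht'
    have htpos : (0 : ℝ) < t := ht n
    refine CStarAlgebra.norm_sub_mul_self_le_of_inr (x := e n) (y := e n) z (he_nonneg n)
      le_rfl (he_norm n) (Real.sqrt_nonneg _) ?_
    rw [Real.sq_sqrt (by positivity)]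
    -- now work in the unitization
    set a' : Unitization ℂ B := (a : Unitization ℂ B) with ha'
    set b' : Unitization ℂ B := (b : Unitization ℂ B) with hb'
    set z' : Unitization ℂ B := (z : Unitization ℂ B) with hz'
    have ha'0 : 0 ≤ a' := Unitization.inr_nonneg_iff.mpr ha0
    have ha'sa : IsSelfAdjoint a' := ha'0.isSelfAdjoint
    have hb'0 : 0 ≤ b' := Unitization.inr_nonneg_iff.mpr hb
    have hz'0 : 0 ≤ z' := Unitization.inr_nonneg_iff.mpr hz0
    have hz'sa : IsSelfAdjoint z' := hz'0.isSelfAdjoint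
    have hz'z' : z' * z' = b' := by
      rw [hz', hb', ← Unitization.inr_mul, hzz]
    have hba' : b' ≤ a' := by
      rw [hb', ha', Unitization.inr_le_iff b a hbsa hsa]
      exact hba
    have hspec : ∀ y ∈ spectrum ℝ a', 0 ≤ y := fun y hy => spectrum_nonneg_of_nonneg ha'0 hy
    have hcont_d : ContinuousOn (fun y : ℝ => (1 + t * y)⁻¹) (spectrum ℝ a') := by
      refine ContinuousOn.inv₀ (by fun_prop) fun y hy => ?_
      have := hspec y hy
      positivity
    have hcont_s : ContinuousOn (fun y : ℝ => Real.sqrt ((1 + t * y)⁻¹)) (spectrum ℝ a') :=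
      Real.continuous_sqrt.comp_continuousOn hcont_d
    set s : Unitization ℂ B := cfc (fun y : ℝ => Real.sqrt ((1 + t * y)⁻¹)) a' with hs
    have hs0 : 0 ≤ s := cfc_nonneg fun y hy => Real.sqrt_nonneg _
    have hssa : IsSelfAdjoint s := hs0.isSelfAdjoint
    -- 1 - e n = s * s in the unitization
    have key1 : (1 : Unitization ℂ B) - (e n : Unitization ℂ B) = s * s := by
      have h1 : (e n : Unitization ℂ B) = cfc (f n) a' :=
        Unitization.real_cfcₙ_eq_cfc_inr a (f n) (by simp [hf])
      have h2 : s * s = cfc (fun y : ℝ => (1 + t * y)⁻¹) a' := by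
        rw [hs, ← cfc_mul _ _ a' hcont_s hcont_s]
        exact cfc_congr fun y hy => Real.mul_self_sqrt (hinv_mem n y (hspec y hy)).1
      have hcont_f : ContinuousOn (f n) (spectrum ℝ a') := by
        simp only [hf]
        exact continuousOn_const.sub hcont_d
      have hadd : cfc (f n) a' + cfc (fun y : ℝ => (1 + t * y)⁻¹) a' = 1 := by
        rw [← cfc_add (a := a') (f n) _ hcont_f hcont_d]
        have hfun : (fun y : ℝ => f n y + (1 + t * y)⁻¹) = fun _ : ℝ => (1 : ℝ) :=
          funext fun y => by simp [hf, ht']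
        rw [hfun, cfc_const_one ℝ a']
      rw [h1, h2, ← hadd, add_sub_cancel_left]
    have hmain : star z' * ((1 : Unitization ℂ B) - (e n : Unitization ℂ B)) * z'
        = star (s * z') * (s * z') := by
      rw [key1, hz'sa.star_eq, star_mul, hssa.star_eq, hz'sa.star_eq]
      noncomm_ring
    have hnorm1 : ‖star (s * z') * (s * z')‖ = ‖s * b' * s‖ := by
      rw [CStarRing.norm_star_mul_self, ← CStarRing.norm_self_mul_star]
      congr 1
      rw [star_mul, hssa.star_eq, hz'sa.star_eq, ← hz'z']
      noncomm_ring
    have hnonneg1 : 0 ≤ s * b' * s := by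
      have := star_left_conjugate_nonneg hb'0 s
      rwa [hssa.star_eq] at this
    have hle1 : s * b' * s ≤ s * a' * s := by
      have := star_left_conjugate_le_conjugate hba' s
      rwa [hssa.star_eq] at this
    have hsas : ‖s * a' * s‖ ≤ t⁻¹ := by
      have h6 : cfc (fun y : ℝ => (Real.sqrt ((1 + t * y)⁻¹) * y) * Real.sqrt ((1 + t * y)⁻¹)) a'
          = cfc (fun y : ℝ => Real.sqrt ((1 + t * y)⁻¹) * y) a'
            * cfc (fun y : ℝ => Real.sqrt ((1 + t * y)⁻¹)) a' :=
        cfc_mul _ _ a' (hcont_s.mul continuousOn_id) hcont_s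
      have h7 : cfc (fun y : ℝ => Real.sqrt ((1 + t * y)⁻¹) * y) a'
          = cfc (fun y : ℝ => Real.sqrt ((1 + t * y)⁻¹)) a' * cfc (fun y : ℝ => y) a' :=
        cfc_mul _ _ a' hcont_s continuousOn_id
      have h8 : cfc (fun y : ℝ => y) a' = a' := cfc_id' ℝ a' ha'sa
      have hsas_eq : s * a' * s
          = cfc (fun y : ℝ => Real.sqrt ((1 + t * y)⁻¹) * y * Real.sqrt ((1 + t * y)⁻¹)) a' := by
        rw [hs, h6, h7, h8]
      rw [hsas_eq]
      refine norm_cfc_le (by positivity) fun y hy => ?_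
      have hy0 : 0 ≤ y := hspec y hy
      have hpos : (0 : ℝ) < 1 + t * y := by positivity
      have heq : Real.sqrt ((1 + t * y)⁻¹) * y * Real.sqrt ((1 + t * y)⁻¹)
          = y * (1 + t * y)⁻¹ := by
        rw [mul_comm _ y, mul_assoc, Real.mul_self_sqrt (by positivity)]
      rw [heq, Real.norm_eq_abs, abs_of_nonneg (by positivity),
        ← div_eq_mul_inv, div_le_iff₀ hpos]
      have h5 : t⁻¹ * (1 + t * y) = t⁻¹ + y := by
        field_simp
      rw [h5]
      linarith [inv_nonneg.mpr htpos.le]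
    calc ‖star z' * ((1 : Unitization ℂ B) - (e n : Unitization ℂ B)) * z'‖
        = ‖s * b' * s‖ := by rw [hmain, hnorm1]
      _ ≤ ‖s * a' * s‖ := CStarAlgebra.norm_le_norm_of_nonneg_of_le hnonneg1 hle1
      _ ≤ t⁻¹ := hsas
  -- conclude by convergence
  have hdiff : ∀ n : ℕ, ‖e n * b * e n - b‖ ≤ 2 * ‖z‖ * Real.sqrt (((n : ℝ) + 1)⁻¹) := by
    intro n
    have h1 : ‖z - z * e n‖ = ‖z - e n * z‖ := by
      rw [← norm_star (z - z * e n), star_sub, star_mul, hzsa.star_eq, (he_sa n).star_eq]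
    have expand : e n * b * e n - b = e n * z * (z * e n - z) + (e n * z - z) * z := by
      rw [← hzz]; noncomm_ring
    calc ‖e n * b * e n - b‖
        = ‖e n * z * (z * e n - z) + (e n * z - z) * z‖ := by rw [expand]
      _ ≤ ‖e n * z * (z * e n - z)‖ + ‖(e n * z - z) * z‖ := norm_add_le _ _
      _ ≤ ‖e n‖ * ‖z‖ * ‖z * e n - z‖ + ‖e n * z - z‖ * ‖z‖ := by
          gcongr
          · exact (norm_mul_le _ _).trans (by gcongr; exact norm_mul_le _ _)
          · exact norm_mul_le _ _
      _ ≤ 1 * ‖z‖ * ‖z * e n - z‖ + ‖e n * z - z‖ * ‖z‖ := by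
          gcongr; exact he_norm n
      _ = ‖z‖ * ‖z - z * e n‖ + ‖z - e n * z‖ * ‖z‖ := by
          rw [one_mul, norm_sub_rev (z * e n), norm_sub_rev (e n * z)]
      _ = ‖z‖ * ‖z - e n * z‖ + ‖z - e n * z‖ * ‖z‖ := by rw [h1]
      _ ≤ ‖z‖ * Real.sqrt (((n : ℝ) + 1)⁻¹) + Real.sqrt (((n : ℝ) + 1)⁻¹) * ‖z‖ := by
          gcongr <;> exact key n
      _ = 2 * ‖z‖ * Real.sqrt (((n : ℝ) + 1)⁻¹) := by ring
  have hlim : Filter.Tendsto (fun n : ℕ => 2 * ‖z‖ * Real.sqrt (((n : ℝ) + 1)⁻¹))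
      Filter.atTop (nhds 0) := by
    have h1 : Filter.Tendsto (fun n : ℕ => ((n : ℝ) + 1)⁻¹) Filter.atTop (nhds 0) := by
      simpa only [one_div] using tendsto_one_div_add_atTop_nhds_zero_nat (𝕜 := ℝ)
    have h3 : Filter.Tendsto (fun n : ℕ => Real.sqrt (((n : ℝ) + 1)⁻¹))
        Filter.atTop (nhds 0) := by
      have h4 := (Real.continuous_sqrt.tendsto 0).comp h1
      rw [Real.sqrt_zero] at h4
      exact h4
    simpa using h3.const_mul (2 * ‖z‖)
  have htend : Filter.Tendsto (fun n : ℕ => e n * b * e n) Filter.atTop (nhds b) := by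
    rw [tendsto_iff_norm_sub_tendsto_zero]
    exact squeeze_zero (fun n => norm_nonneg _) hdiff hlim
  refine mem_closure_of_tendsto htend (Filter.Eventually.of_forall fun n => ?_)
  exact Submodule.subset_span ⟨e n, he_mem n, b, e n, he_mem n, rfl⟩
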